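/- Order claim: Let T : ℝ → ℝ be a terrain and let a, b, c, d be real numbers with a < b < c < d. If the point (a, T a) sees (c, T c) and the point (b, T b) sees (d, T d), then (a, T a) sees (d, T d). -/

import Mathlib

def Sees (T : ℝ → ℝ) (x y : ℝ) : Prop :=
  ∀ t ∈ Set.Icc (0:ℝ) 1, (1 - t) * T x + t * T y ≥ T ((1 - t) * x + t * y)

theorem order_claim (T : ℝ → ℝ) (a b c d : ℝ)
    (hab : a < b) (hbc : b < c) (hcd : c < d)
    (hac : Sees T a c) (hbd : Sees T b d) : Sees T a d := by
  have hca : (0:ℝ) < c - a := by linarith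
  have hdb : (0:ℝ) < d - b := by linarith
  have hda : (0:ℝ) < d - a := by linarith
  have hca' : c - a ≠ 0 := ne_of_gt hca
  have hdb' : d - b ≠ 0 := ne_of_gt hdb
  -- B below segment AC
  have h1 : (c - a) * T b ≤ (c - b) * T a + (b - a) * T c := by
    have hs0 : (0:ℝ) ≤ (b - a) / (c - a) := div_nonneg (by linarith) hca.le
    have hs1 : (b - a) / (c - a) ≤ 1 := by rw [div_le_one hca]; linarith
    have h := hac ((b - a) / (c - a)) ⟨hs0, hs1⟩
    have hx : (1 - (b - a) / (c - a)) * a + (b - a) / (c - a) * c = b := by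
      field_simp
      ring
    rw [hx, ge_iff_le] at h
    have h2 := mul_le_mul_of_nonneg_left h hca.le
    have e1 : (c - a) * ((1 - (b - a) / (c - a)) * T a + (b - a) / (c - a) * T c)
        = (c - b) * T a + (b - a) * T c := by
      field_simp
      ring
    linarith [e1 ▸ h2]
  -- C below segment BD
  have h2 : (d - b) * T c ≤ (d - c) * T b + (c - b) * T d := by
    have hs0 : (0:ℝ) ≤ (c - b) / (d - b) := div_nonneg (by linarith) hdb.le
    have hs1 : (c - b) / (d - b) ≤ 1 := by rw [div_le_one hdb]; linarith
    have h := hbd ((c - b) / (d - b)) ⟨hs0, hs1⟩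
    have hx : (1 - (c - b) / (d - b)) * b + (c - b) / (d - b) * d = c := by
      field_simp
      ring
    rw [hx, ge_iff_le] at h
    have h2 := mul_le_mul_of_nonneg_left h hdb.le
    have e1 : (d - b) * ((1 - (c - b) / (d - b)) * T b + (c - b) / (d - b) * T d)
        = (d - c) * T b + (c - b) * T d := by
      field_simp
      ring
    linarith [e1 ▸ h2]
  -- C below line AD
  have hstar : (d - a) * T c ≤ (d - c) * T a + (c - a) * T d := by
    nlinarith [mul_le_mul_of_nonneg_left h1 (by linarith : (0:ℝ) ≤ d - c),
      mul_le_mul_of_nonneg_left h2 (by linarith : (0:ℝ) ≤ c - a)]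
  -- B below line AD
  have hstar2 : (d - a) * T b ≤ (d - b) * T a + (b - a) * T d := by
    nlinarith [mul_le_mul_of_nonneg_left h1 (by linarith : (0:ℝ) ≤ d - b),
      mul_le_mul_of_nonneg_left h2 (by linarith : (0:ℝ) ≤ b - a)]
  intro t ht
  obtain ⟨ht0, ht1⟩ := ht
  obtain ⟨x, hxdef⟩ : ∃ x, x = (1 - t) * a + t * d := ⟨_, rfl⟩
  have hxa : a ≤ x := by nlinarith
  have hxd : x ≤ d := by nlinarith
  have hxt : x - a = t * (d - a) := by rw [hxdef]; ring
  have hdx : d - x = (1 - t) * (d - a) := by rw [hxdef]; ring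
  rw [← hxdef, ge_iff_le]
  rcases le_or_gt x c with hxc | hxc
  · -- use segment AC
    have hs0 : (0:ℝ) ≤ (x - a) / (c - a) := div_nonneg (by linarith) hca.le
    have hs1 : (x - a) / (c - a) ≤ 1 := by rw [div_le_one hca]; linarith
    have h := hac ((x - a) / (c - a)) ⟨hs0, hs1⟩
    have hx : (1 - (x - a) / (c - a)) * a + (x - a) / (c - a) * c = x := by
      field_simp
      ring
    rw [hx, ge_iff_le] at h
    have hseg : (c - a) * T x ≤ (c - x) * T a + (x - a) * T c := by
      have h2 := mul_le_mul_of_nonneg_left h hca.le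
      have e1 : (c - a) * ((1 - (x - a) / (c - a)) * T a + (x - a) / (c - a) * T c)
          = (c - x) * T a + (x - a) * T c := by
        field_simp
        ring
      linarith [e1 ▸ h2]
    have key : (d - a) * ((c - x) * T a + (x - a) * T c)
        ≤ (c - a) * ((d - x) * T a + (x - a) * T d) := by
      nlinarith [mul_le_mul_of_nonneg_left hstar (by linarith : (0:ℝ) ≤ x - a)]
    have e2 : (c - a) * ((d - x) * T a + (x - a) * T d)
        = (c - a) * (d - a) * ((1 - t) * T a + t * T d) := by
      rw [hdx, hxt]; ring
    have hA := mul_le_mul_of_nonneg_left hseg hda.le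
    have final : (c - a) * (d - a) * T x ≤ (c - a) * (d - a) * ((1 - t) * T a + t * T d) :=
      calc (c - a) * (d - a) * T x = (d - a) * ((c - a) * T x) := by ring
        _ ≤ (d - a) * ((c - x) * T a + (x - a) * T c) := hA
        _ ≤ (c - a) * ((d - x) * T a + (x - a) * T d) := key
        _ = (c - a) * (d - a) * ((1 - t) * T a + t * T d) := e2
    exact le_of_mul_le_mul_left final (mul_pos hca hda)
  · -- use segment BD
    have hs0 : (0:ℝ) ≤ (x - b) / (d - b) := div_nonneg (by linarith) hdb.le
    have hs1 : (x - b) / (d - b) ≤ 1 := by rw [div_le_one hdb]; linarith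
    have h := hbd ((x - b) / (d - b)) ⟨hs0, hs1⟩
    have hx : (1 - (x - b) / (d - b)) * b + (x - b) / (d - b) * d = x := by
      field_simp
      ring
    rw [hx, ge_iff_le] at h
    have hseg : (d - b) * T x ≤ (d - x) * T b + (x - b) * T d := by
      have h2 := mul_le_mul_of_nonneg_left h hdb.le
      have e1 : (d - b) * ((1 - (x - b) / (d - b)) * T b + (x - b) / (d - b) * T d)
          = (d - x) * T b + (x - b) * T d := by
        field_simp
        ring
      linarith [e1 ▸ h2]
    have key : (d - a) * ((d - x) * T b + (x - b) * T d)
        ≤ (d - b) * ((d - x) * T a + (x - a) * T d) := by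
      nlinarith [mul_le_mul_of_nonneg_left hstar2 (by linarith : (0:ℝ) ≤ d - x)]
    have e2 : (d - b) * ((d - x) * T a + (x - a) * T d)
        = (d - b) * (d - a) * ((1 - t) * T a + t * T d) := by
      rw [hdx, hxt]; ring
    have hA := mul_le_mul_of_nonneg_left hseg hda.le
    have final : (d - b) * (d - a) * T x ≤ (d - b) * (d - a) * ((1 - t) * T a + t * T d) :=
      calc (d - b) * (d - a) * T x = (d - a) * ((d - b) * T x) := by ring
        _ ≤ (d - a) * ((d - x) * T b + (x - b) * T d) := hA
        _ ≤ (d - b) * ((d - x) * T a + (x - a) * T d) := key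
        _ = (d - b) * (d - a) * ((1 - t) * T a + t * T d) := e2
    exact le_of_mul_le_mul_left final (mul_pos hdb hda)
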